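/- Starting from k^ℓ labeled chips on the root (ℓ ≥ 1) and performing firing steps only at the root until the root holds no chips (so the root fires exactly k^{ℓ−1} times), call the resulting function from {1,…,k^ℓ} to {1,…,k} sending each chip label to the index of the root's child on which it lies a dispersion. The number of distinct dispersions arising over all such firing sequences equals C_{k, k^{ℓ−1}}, the k^{ℓ−1}-th k-dimensional Catalan number. -/

import Mathlib

/-- A firing step performed at the specific vertex `v`. -/
def FireStepAt (k N v : ℕ) (c c' : Fin N → ℕ) : Prop :=
  ∃ t : Fin k → Fin N,
    StrictMono t ∧
    (∀ j, c (t j) = v) ∧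
    (∀ j : Fin k, c' (t j) = k * (v - 1) + (j : ℕ) + 2) ∧
    (∀ i : Fin N, (∀ j, i ≠ t j) → c' i = c i)

/-- `A_{k,m}` : ballot sequences of length `k*m` with values in `Fin k` (value `j`
representing `j+1 ∈ {1,…,k}`): each value occurs exactly `m` times, and in every prefix
the number of occurrences of `j` is at least the number of occurrences of `j+1`. -/
def CatalanSet (k m : ℕ) : Set (Fin (k * m) → Fin k) :=
  {a | (∀ v : Fin k, (Finset.univ.filter (fun i => a i = v)).card = m) ∧
    ∀ (p j : ℕ), j + 1 < k →
      (Finset.univ.filter (fun i : Fin (k * m) => (i : ℕ) < p ∧ (a i : ℕ) = j + 1)).card ≤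
      (Finset.univ.filter (fun i : Fin (k * m) => (i : ℕ) < p ∧ (a i : ℕ) = j)).card}

/-- The set of dispersions of `k^ℓ` chips from the root to its `k` children:
`d i` (0-based, representing child index `d i + 1 ∈ {1,…,k}`) records on which child
chip `i` lies after firing only at the root until the root holds no chips. -/
def Dispersions (k ℓ : ℕ) : Set (Fin (k ^ ℓ) → Fin k) :=
  {d | ∃ c : Fin (k ^ ℓ) → ℕ,
    Relation.ReflTransGen (FireStepAt k (k ^ ℓ) 1) (fun _ => 1) c ∧
    (∀ i, c i ≠ 1) ∧
    (∀ i, c i = (d i : ℕ) + 2)}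


section Helpers
open Finset

/-- Predicate abstracting both sets. -/
def Pred (k m : ℕ) {N : ℕ} (d : Fin N → Fin k) : Prop :=
  (∀ v : Fin k, (Finset.univ.filter (fun i => d i = v)).card = m) ∧
    ∀ (p j : ℕ), j + 1 < k →
      (Finset.univ.filter (fun i : Fin N => (i : ℕ) < p ∧ (d i : ℕ) = j + 1)).card ≤
      (Finset.univ.filter (fun i : Fin N => (i : ℕ) < p ∧ (d i : ℕ) = j)).card

lemma pred_cast {k m N N' : ℕ} (h : N = N') (d : Fin N' → Fin k) :
    Pred k m (d ∘ Fin.cast h) ↔ Pred k m d := by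
  subst h
  have : d ∘ Fin.cast rfl = d := rfl
  rw [this]

lemma strictMono_of_adj {α : Type*} [Preorder α] {k : ℕ} (f : Fin k → α)
    (h : ∀ j, (hj : j + 1 < k) → f ⟨j, Nat.lt_of_succ_lt hj⟩ < f ⟨j + 1, hj⟩) :
    StrictMono f := by
  intro a b hab
  obtain ⟨b, hb⟩ := b
  induction b with
  | zero => exact absurd hab (by simp [Fin.lt_def])
  | succ n ih =>
    have hn : n < k := Nat.lt_of_succ_lt hb
    rcases Nat.lt_or_ge (a : ℕ) n with h1 | h1
    · exact lt_trans (ih hn (by simpa [Fin.lt_def] using h1)) (h n hb)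
    · have : (a : ℕ) = n := Nat.le_antisymm (Nat.lt_succ_iff.mp hab) h1
      have ha : a = ⟨n, hn⟩ := Fin.ext this
      rw [ha]; exact h n hb

/-- Invariant along root-firing chains. -/
def InvC (k N : ℕ) (c : Fin N → ℕ) : Prop :=
  (∀ j, j < k → (Finset.univ.filter (fun i => c i = j + 2)).card =
      (Finset.univ.filter (fun i => c i = 2)).card) ∧
    ∀ (p j : ℕ), j + 1 < k →
      (Finset.univ.filter (fun i : Fin N => (i : ℕ) < p ∧ c i = (j + 1) + 2)).card ≤
      (Finset.univ.filter (fun i : Fin N => (i : ℕ) < p ∧ c i = j + 2)).card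

section Step
variable {k N : ℕ} {c c' : Fin N → ℕ} {t : Fin k → Fin N}

lemma filter_step (ht : StrictMono t) (h1 : ∀ j, c (t j) = 1)
    (h2 : ∀ j : Fin k, c' (t j) = (j : ℕ) + 2)
    (h3 : ∀ i : Fin N, (∀ j, i ≠ t j) → c' i = c i)
    (Q : Fin N → Prop) [DecidablePred Q] {j : ℕ} (hj : j < k) :
    (Finset.univ.filter (fun i => Q i ∧ c' i = j + 2)).card =
      (Finset.univ.filter (fun i => Q i ∧ c i = j + 2)).card +
        (if Q (t ⟨j, hj⟩) then 1 else 0) := by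
  set j' : Fin k := ⟨j, hj⟩ with hj'
  have hnot : t j' ∉ Finset.univ.filter (fun i => Q i ∧ c i = j + 2) := by
    simp only [mem_filter, mem_univ, true_and, not_and]
    intro _
    rw [h1 j']; omega
  have key : (Finset.univ.filter (fun i => Q i ∧ c' i = j + 2)) =
      if Q (t j') then insert (t j') (Finset.univ.filter (fun i => Q i ∧ c i = j + 2))
      else Finset.univ.filter (fun i => Q i ∧ c i = j + 2) := by
    ext i
    simp only [mem_filter, mem_univ, true_and]
    by_cases hi : ∀ j'', i ≠ t j''
    · have hc : c' i = c i := h3 i hi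
      have hne : i ≠ t j' := hi j'
      by_cases hq : Q (t j')
      · rw [if_pos hq]; simp [hc, hne, mem_filter]
      · rw [if_neg hq]; simp [hc, mem_filter]
    · push_neg at hi
      obtain ⟨j'', rfl⟩ := hi
      have hcv : c' (t j'') = (j'' : ℕ) + 2 := h2 j''
      have hco : c (t j'') = 1 := h1 j''
      by_cases hjj : j'' = j'
      · subst hjj
        have hval : (j' : ℕ) = j := rfl
        rw [hval] at hcv
        by_cases hq : Q (t j')
        · rw [if_pos hq]; simp [hcv, hq, mem_insert]
        · rw [if_neg hq]
          simp only [mem_filter, mem_univ, true_and]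
          constructor
          · rintro ⟨hq', _⟩; exact absurd hq' hq
          · rintro ⟨_, h⟩; omega
      · have hne : t j'' ≠ t j' := fun h => hjj (ht.injective h)
        have hvne : (j'' : ℕ) + 2 ≠ j + 2 := by
          intro h
          apply hjj
          apply Fin.ext
          have : (j' : ℕ) = j := rfl
          omega
        by_cases hq : Q (t j')
        · rw [if_pos hq]; simp [mem_insert, mem_filter, hcv, hco, hne, hvne]; exact fun _ h => hvne (by omega)
        · rw [if_neg hq]; simp [mem_filter, hcv, hco, hvne]; exact fun _ h => hvne (by omega)
  rw [key]
  by_cases hq : Q (t j')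
  · rw [if_pos hq, if_pos hq, Finset.card_insert_of_notMem hnot]
  · rw [if_neg hq, if_neg hq]; omega

lemma inv_step (hk : 1 ≤ k) (hstep : FireStepAt k N 1 c c') (hinv : InvC k N c) :
    InvC k N c' := by
  obtain ⟨t, ht, h1, h2', h3⟩ := hstep
  have h2 : ∀ j : Fin k, c' (t j) = (j : ℕ) + 2 := by
    intro j; have := h2' j; simpa using this
  constructor
  · intro j hj
    have e1 := filter_step ht h1 h2 h3 (fun _ => True) hj
    have e2 := filter_step ht h1 h2 h3 (fun _ => True) hk
    simp only [if_pos trivial, true_and] at e1 e2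
    rw [e1, e2, hinv.1 j hj]
  · intro p j hj
    have e1 := filter_step ht h1 h2 h3 (fun i : Fin N => (i : ℕ) < p) (hj : j + 1 < k)
    have e2 := filter_step ht h1 h2 h3 (fun i : Fin N => (i : ℕ) < p) (Nat.lt_of_succ_lt hj)
    rw [e1, e2]
    have hlt : t ⟨j, Nat.lt_of_succ_lt hj⟩ < t ⟨j + 1, hj⟩ := ht (by simp [Fin.lt_def])
    have hmono : (if ((t ⟨j + 1, hj⟩ : Fin N) : ℕ) < p then 1 else 0) ≤
        (if ((t ⟨j, Nat.lt_of_succ_lt hj⟩ : Fin N) : ℕ) < p then 1 else 0) := by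
      have hlt' : ((t ⟨j, Nat.lt_of_succ_lt hj⟩ : Fin N) : ℕ) <
          ((t ⟨j + 1, hj⟩ : Fin N) : ℕ) := hlt
      by_cases h : ((t ⟨j + 1, hj⟩ : Fin N) : ℕ) < p
      · rw [if_pos h, if_pos (lt_trans hlt' h)]
      · rw [if_neg h]; omega
    exact Nat.add_le_add (hinv.2 p j hj) hmono

lemma inv_chain {c : Fin N → ℕ} (hk : 1 ≤ k)
    (h : Relation.ReflTransGen (FireStepAt k N 1) (fun _ => 1) c) : InvC k N c := by
  induction h with
  | refl =>
    constructor
    · intro j hj; simp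
    · intro p j hj; simp
  | tail _ hstep ih => exact inv_step hk hstep ih
end Step

lemma pred_of_chain {k N m : ℕ} (hk : 1 ≤ k) (hN : N = k * m) (d : Fin N → Fin k)
    (c : Fin N → ℕ) (hchain : Relation.ReflTransGen (FireStepAt k N 1) (fun _ => 1) c)
    (hval : ∀ i, c i = (d i : ℕ) + 2) : Pred k m d := by
  have hinv := inv_chain hk hchain
  have htrans : ∀ j : ℕ, j < k → (Finset.univ.filter (fun i => c i = j + 2)) =
      (Finset.univ.filter (fun i => (d i : ℕ) = j)) := by
    intro j hj
    ext i
    simp only [mem_filter, mem_univ, true_and, hval i]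
    omega
  have htransp : ∀ p j : ℕ, (Finset.univ.filter (fun i : Fin N => (i : ℕ) < p ∧ c i = j + 2)) =
      (Finset.univ.filter (fun i : Fin N => (i : ℕ) < p ∧ (d i : ℕ) = j)) := by
    intro p j
    ext i
    simp only [mem_filter, mem_univ, true_and, hval i]
    omega
  have hfib : ∀ v : Fin k, (Finset.univ.filter (fun i => d i = v)) =
      (Finset.univ.filter (fun i => (d i : ℕ) = (v : ℕ))) := by
    intro v; ext i
    simp only [mem_filter, mem_univ, true_and, Fin.ext_iff]
  -- all fibers have the same card as fiber 0
  have hzero : (0 : ℕ) < k := hk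
  have heq : ∀ j : ℕ, j < k → (Finset.univ.filter (fun i => (d i : ℕ) = j)).card =
      (Finset.univ.filter (fun i => (d i : ℕ) = 0)).card := by
    intro j hj
    rw [← htrans j hj, ← htrans 0 hzero, hinv.1 j hj]
  -- sum of fiber cards is N
  have hsum : N = ∑ v : Fin k, (Finset.univ.filter (fun i => d i = v)).card := by
    have := Finset.card_eq_sum_card_fiberwise
      (f := d) (s := Finset.univ) (t := (Finset.univ : Finset (Fin k)))
      (fun x _ => Finset.mem_univ _)
    simpa using this
  have hconst : ∀ v : Fin k, (Finset.univ.filter (fun i => d i = v)).card =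
      (Finset.univ.filter (fun i => (d i : ℕ) = 0)).card := by
    intro v
    rw [hfib v]
    exact heq (v : ℕ) v.isLt
  have hsum2 : N = k * (Finset.univ.filter (fun i => (d i : ℕ) = 0)).card :=
    hsum.trans (by
      rw [Finset.sum_congr rfl (fun v _ => hconst v)]
      simp [Finset.sum_const, mul_comm])
  have hcard0 : (Finset.univ.filter (fun i => (d i : ℕ) = 0)).card = m :=
    Nat.eq_of_mul_eq_mul_left hzero (hsum2.symm.trans hN)
  constructor
  · intro v
    rw [hconst v, hcard0]
  · intro p j hj
    have := hinv.2 p j hj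
    rwa [htransp p (j + 1), htransp p j] at this

section Back
variable {k N m : ℕ} (d : Fin N → Fin k)

/-- the fiber of `d` over `v`. -/
def fibd (v : Fin k) : Finset (Fin N) := Finset.univ.filter (fun i => d i = v)

variable {d} (hcard : ∀ v, (fibd d v).card = m)

/-- rank of `i` within its fiber. -/
def rankd (f : Fin N → Fin k) (i : Fin N) : ℕ :=
  (Finset.univ.filter (fun i' => i' < i ∧ f i' = f i)).card

lemma rank_iso (v : Fin k) (x : Fin m) :
    (Finset.univ.filter
      (fun i => i < ((fibd d v).orderIsoOfFin (hcard v) x : Fin N) ∧ d i = v)).card = (x : ℕ) := by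
  classical
  set e := (fibd d v).orderIsoOfFin (hcard v)
  have hmemfib : ∀ y : Fin m, d ((e y : Fin N)) = v := by
    intro y
    have h := (e y).2
    unfold fibd at h
    rw [Finset.mem_filter] at h
    exact h.2
  have hb : (Finset.univ.filter (fun y : Fin m => y < x)).card =
      (Finset.univ.filter (fun i => i < (e x : Fin N) ∧ d i = v)).card := by
    apply Finset.card_bij (fun (y : Fin m) _ => (e y : Fin N))
    · intro y hy
      simp only [Finset.mem_filter, Finset.mem_univ, true_and] at hy ⊢
      exact ⟨Subtype.coe_lt_coe.mpr (e.strictMono hy), hmemfib y⟩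
    · intro y1 h1 y2 h2 h
      exact e.injective (Subtype.ext h)
    · intro i hi
      simp only [Finset.mem_filter, Finset.mem_univ, true_and] at hi
      have himem : i ∈ fibd d v := by simp [fibd, hi.2]
      refine ⟨e.symm ⟨i, himem⟩, Finset.mem_filter.mpr ⟨Finset.mem_univ _, ?_⟩, ?_⟩
      · have h2 : e (e.symm ⟨i, himem⟩) < e x := by
          rw [e.apply_symm_apply]
          exact Subtype.coe_lt_coe.symm.mpr hi.1
        exact e.lt_iff_lt.mp h2
      · rw [e.apply_symm_apply]
  rw [← hb]
  have hIio : (Finset.univ.filter (fun y : Fin m => y < x)) = Finset.Iio x := by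
    ext y; simp
  rw [hIio, Fin.card_Iio]

lemma d_iso (v : Fin k) (x : Fin m) :
    d (((fibd d v).orderIsoOfFin (hcard v) x : Fin N)) = v := by
  have h := ((fibd d v).orderIsoOfFin (hcard v) x).2
  unfold fibd at h
  rw [Finset.mem_filter] at h
  exact h.2

lemma rankd_iso (v : Fin k) (x : Fin m) :
    rankd d (((fibd d v).orderIsoOfFin (hcard v) x : Fin N)) = (x : ℕ) := by
  unfold rankd
  rw [d_iso hcard v x]
  exact rank_iso hcard v x

lemma rankd_lt (hcard : ∀ v, (fibd d v).card = m) (i : Fin N) : rankd d i < m := by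
  have hmem : i ∈ fibd d (d i) := by simp [fibd]
  have hssub : (Finset.univ.filter (fun i' => i' < i ∧ d i' = d i)) ⊂ fibd d (d i) := by
    constructor
    · intro i' hi'
      simp only [Finset.mem_filter, Finset.mem_univ, true_and] at hi'
      simp [fibd, hi'.2]
    · intro hsub
      have := hsub hmem
      simp only [Finset.mem_filter, Finset.mem_univ, true_and] at this
      exact absurd this.1 (lt_irrefl i)
  have := Finset.card_lt_card hssub
  rwa [hcard (d i)] at this

lemma eq_iso_rankd (i : Fin N) :
    i = (((fibd d (d i)).orderIsoOfFin (hcard (d i)))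
      ⟨rankd d i, rankd_lt hcard i⟩ : Fin N) := by
  set e := (fibd d (d i)).orderIsoOfFin (hcard (d i))
  have hmem : i ∈ fibd d (d i) := by simp [fibd]
  set y := e.symm ⟨i, hmem⟩ with hy
  have hiy : (e y : Fin N) = i := by rw [hy, e.apply_symm_apply]
  have hry : rankd d i = (y : ℕ) := by
    conv_lhs => rw [← hiy]
    exact rankd_iso hcard (d i) y
  have : (⟨rankd d i, rankd_lt hcard i⟩ : Fin m) = y := Fin.ext hry
  rw [this, hiy]

lemma t_adj
    (hballot : ∀ (p j : ℕ), j + 1 < k →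
      (Finset.univ.filter (fun i : Fin N => (i : ℕ) < p ∧ (d i : ℕ) = j + 1)).card ≤
      (Finset.univ.filter (fun i : Fin N => (i : ℕ) < p ∧ (d i : ℕ) = j)).card)
    {s : ℕ} (hs : s < m) {j : ℕ} (hj : j + 1 < k) :
    (((fibd d ⟨j, Nat.lt_of_succ_lt hj⟩).orderIsoOfFin
        (hcard ⟨j, Nat.lt_of_succ_lt hj⟩) ⟨s, hs⟩ : Fin N) : ℕ) <
    (((fibd d ⟨j + 1, hj⟩).orderIsoOfFin (hcard ⟨j + 1, hj⟩) ⟨s, hs⟩ : Fin N) : ℕ) := by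
  classical
  set v0 : Fin k := ⟨j, Nat.lt_of_succ_lt hj⟩
  set v1 : Fin k := ⟨j + 1, hj⟩
  set y : Fin N := ((fibd d v0).orderIsoOfFin (hcard v0) ⟨s, hs⟩ : Fin N)
  set x : Fin N := ((fibd d v1).orderIsoOfFin (hcard v1) ⟨s, hs⟩ : Fin N)
  have hdx : d x = v1 := d_iso hcard v1 ⟨s, hs⟩
  have hrx : (Finset.univ.filter (fun i => i < x ∧ d i = v1)).card = s :=
    rank_iso hcard v1 ⟨s, hs⟩
  have hry : (Finset.univ.filter (fun i => i < y ∧ d i = v0)).card = s :=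
    rank_iso hcard v0 ⟨s, hs⟩
  -- the set of indices ≤ x with value j+1 has cardinality s+1
  have hA : (Finset.univ.filter
      (fun i : Fin N => (i : ℕ) < (x : ℕ) + 1 ∧ (d i : ℕ) = j + 1)).card = s + 1 := by
    have : (Finset.univ.filter (fun i : Fin N => (i : ℕ) < (x : ℕ) + 1 ∧ (d i : ℕ) = j + 1)) =
        insert x (Finset.univ.filter (fun i => i < x ∧ d i = v1)) := by
      ext i
      simp only [Finset.mem_filter, Finset.mem_univ, true_and, Finset.mem_insert]
      constructor
      · rintro ⟨hle, hv⟩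
        rcases eq_or_lt_of_le (Nat.lt_succ_iff.mp hle) with h | h
        · left; exact Fin.ext h
        · right; exact ⟨h, Fin.ext hv⟩
      · rintro (rfl | ⟨hlt, hv⟩)
        · exact ⟨Nat.lt_succ_self _, by rw [hdx]⟩
        · exact ⟨Nat.lt_succ_of_lt hlt, by rw [hv]⟩
    rw [this, Finset.card_insert_of_notMem (by simp), hrx]
  have hB := hballot ((x : ℕ) + 1) j hj
  rw [hA] at hB
  by_contra hcon
  push_neg at hcon
  -- then value-j indices ≤ x are < y, at most s of them
  have hsub : (Finset.univ.filter
      (fun i : Fin N => (i : ℕ) < (x : ℕ) + 1 ∧ (d i : ℕ) = j)) ⊆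
      (Finset.univ.filter (fun i => i < y ∧ d i = v0)) := by
    intro i hi
    simp only [Finset.mem_filter, Finset.mem_univ, true_and] at hi ⊢
    have hne : (i : ℕ) ≠ (x : ℕ) := by
      intro h
      have : (d i : ℕ) = j + 1 := by
        have : i = x := Fin.ext h
        rw [this, hdx]
      omega
    have : (i : ℕ) < (x : ℕ) := by omega
    exact ⟨lt_of_lt_of_le this hcon, Fin.ext hi.2⟩
  have := Finset.card_le_card hsub
  rw [hry] at this
  omega

/-- configuration after `s` firings. -/
def cfg (d : Fin N → Fin k) (s : ℕ) : Fin N → ℕ :=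
  fun i => if rankd d i < s then (d i : ℕ) + 2 else 1

lemma cfg_step (hcard : ∀ v, (fibd d v).card = m)
    (hballot : ∀ (p j : ℕ), j + 1 < k →
      (Finset.univ.filter (fun i : Fin N => (i : ℕ) < p ∧ (d i : ℕ) = j + 1)).card ≤
      (Finset.univ.filter (fun i : Fin N => (i : ℕ) < p ∧ (d i : ℕ) = j)).card)
    {s : ℕ} (hs : s < m) : FireStepAt k N 1 (cfg d s) (cfg d (s + 1)) := by
  refine ⟨fun j => ((fibd d j).orderIsoOfFin (hcard j) ⟨s, hs⟩ : Fin N), ?_, ?_, ?_, ?_⟩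
  · apply strictMono_of_adj
    intro j hj
    exact t_adj hcard hballot hs hj
  · intro j
    simp only [cfg, rankd_iso hcard j ⟨s, hs⟩]
    rw [if_neg (by omega)]
  · intro j
    simp only [cfg, rankd_iso hcard j ⟨s, hs⟩]
    rw [if_pos (by omega), d_iso hcard j ⟨s, hs⟩]
    simp
  · intro i hi
    have hne : rankd d i ≠ s := by
      intro he
      have hx : (⟨rankd d i, rankd_lt hcard i⟩ : Fin m) = ⟨s, hs⟩ := Fin.ext he
      have hkey : i = ((fibd d (d i)).orderIsoOfFin (hcard (d i)) ⟨s, hs⟩ : Fin N) := by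
        conv_lhs => rw [eq_iso_rankd hcard i]
        rw [hx]
      exact hi (d i) hkey
    simp only [cfg]
    by_cases hlt : rankd d i < s
    · rw [if_pos (by omega), if_pos hlt]
    · rw [if_neg (by omega), if_neg hlt]

lemma cfg_chain (hcard : ∀ v, (fibd d v).card = m)
    (hballot : ∀ (p j : ℕ), j + 1 < k →
      (Finset.univ.filter (fun i : Fin N => (i : ℕ) < p ∧ (d i : ℕ) = j + 1)).card ≤
      (Finset.univ.filter (fun i : Fin N => (i : ℕ) < p ∧ (d i : ℕ) = j)).card)
    {s : ℕ} (hs : s ≤ m) :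
    Relation.ReflTransGen (FireStepAt k N 1) (fun _ => 1) (cfg d s) := by
  induction s with
  | zero =>
    have : cfg d 0 = (fun _ => (1 : ℕ)) := by
      funext i; simp [cfg]
    rw [this]
  | succ n ih =>
    exact Relation.ReflTransGen.tail (ih (Nat.le_of_succ_le hs))
      (cfg_step hcard hballot (Nat.lt_of_succ_le hs))

lemma chain_of_pred {d : Fin N → Fin k} (hP : Pred k m d) :
    ∃ c : Fin N → ℕ,
      Relation.ReflTransGen (FireStepAt k N 1) (fun _ => 1) c ∧
      (∀ i, c i ≠ 1) ∧ (∀ i, c i = (d i : ℕ) + 2) := by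
  have hcard : ∀ v, (fibd d v).card = m := hP.1
  refine ⟨cfg d m, cfg_chain hcard hP.2 (le_refl m), ?_, ?_⟩
  · intro i
    simp only [cfg, if_pos (rankd_lt hcard i)]
    omega
  · intro i
    simp only [cfg, if_pos (rankd_lt hcard i)]
end Back

end Helpers

open Finset in
/-- The number of distinct dispersions of `k^ℓ` chips from the root to its `k` children
equals the `k^(ℓ-1)`-th `k`-dimensional Catalan number `C_{k,k^(ℓ-1)}`. -/
theorem stmt2 (k ℓ : ℕ) (hk : 2 ≤ k) (hℓ : 1 ≤ ℓ) :
    (Dispersions k ℓ).ncard = (CatalanSet k (k ^ (ℓ - 1))).ncard := by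
  set m := k ^ (ℓ - 1) with hm
  have hN : k ^ ℓ = k * m := by
    conv_lhs => rw [← Nat.sub_add_cancel hℓ]
    rw [pow_succ, mul_comm]
  set F : (Fin (k * m) → Fin k) → (Fin (k ^ ℓ) → Fin k) :=
    fun a => a ∘ Fin.cast hN with hF
  have hFinj : Function.Injective F := by
    intro a b h
    funext i
    have := congrFun h (Fin.cast hN.symm i)
    simpa [hF] using this
  have hset : Dispersions k ℓ = F '' CatalanSet k m := by
    ext d
    constructor
    · intro hd
      obtain ⟨c, hchain, hne, hval⟩ := hd
      have hPd : Pred k m d := pred_of_chain (by omega) hN d c hchain hval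
      refine ⟨d ∘ Fin.cast hN.symm, ?_, ?_⟩
      · exact (pred_cast hN.symm d).mpr hPd
      · funext i
        simp [hF, Function.comp]
    · rintro ⟨a, ha, rfl⟩
      have hPa : Pred k m a := ha
      have hPd : Pred k m (F a) := (pred_cast hN a).mpr hPa
      exact chain_of_pred hPd
  rw [hset, Set.ncard_image_of_injective _ hFinj]
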